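/- For a simple graph G with n ≥ 1 vertices, the interlace polynomial q_N(G;x) has no constant term (i.e., its constant coefficient is zero). -/

import Mathlib

/-- The GF(2)-nullity of the principal submatrix of `A` indexed by `T`. -/
noncomputable def nullityOn {V : Type*} [Fintype V] [DecidableEq V]
    (A : Matrix V V (ZMod 2)) (T : Finset V) : ℕ :=
  T.card - (A.submatrix (fun i : {x // x ∈ T} => (i : V)) (fun i : {x // x ∈ T} => (i : V))).rank

/-- The interlace polynomial `q_N(G;x) = ∑_{T ⊆ V(G)} (x-1)^{n(G[T])}`,
evaluated at the integer `x`. -/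
noncomputable def interlace {V : Type*} [Fintype V] [DecidableEq V]
    (G : SimpleGraph V) [DecidableRel G.Adj] (x : ℤ) : ℤ :=
  ∑ T : Finset V, (x - 1) ^ nullityOn (G.adjMatrix (ZMod 2)) T

set_option linter.unusedSectionVars false
set_option linter.unusedVariables false
set_option linter.unreachableTactic false
set_option linter.unusedTactic false

section Aux
open Matrix Finset Submodule Module
variable {n : Type*} [Fintype n] [DecidableEq n]

section conj
variable (A : Matrix n n (ZMod 2)) (i j : n)
variable (A : Matrix n n (ZMod 2)) (i j : n)

def Nm : Matrix n n (ZMod 2) :=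
  Matrix.of fun k a => if k ≠ i ∧ k ≠ j then (if a = i then A k j else if a = j then A k i else 0) else 0

lemma Nm_col (k a : n) (hai : a ≠ i) (haj : a ≠ j) : Nm A i j k a = 0 := by
  simp [Nm, hai, haj]
lemma Nm_row_i (a : n) : Nm A i j i a = 0 := by simp [Nm]
lemma Nm_row_j (a : n) : Nm A i j j a = 0 := by simp [Nm]
lemma Nm_ki (hij : i ≠ j) (k : n) (h1 : k ≠ i) (h2 : k ≠ j) : Nm A i j k i = A k j := by
  simp [Nm, h1, h2]
lemma Nm_kj (hij : i ≠ j) (k : n) (h1 : k ≠ i) (h2 : k ≠ j) : Nm A i j k j = A k i := by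
  simp [Nm, h1, h2, Ne.symm hij]

lemma Nm_split (hij : i ≠ j) (f : n → ZMod 2) (k : n) :
    ∑ a, Nm A i j k a * f a = Nm A i j k i * f i + Nm A i j k j * f j := by
  have : ∀ a, Nm A i j k a * f a =
      (if a = i then Nm A i j k i * f i else 0) + (if a = j then Nm A i j k j * f j else 0) := by
    intro a
    by_cases h1 : a = i
    · subst h1; simp [hij]
    · by_cases h2 : a = j
      · subst h2; simp [h1]
      · simp [h1, h2, Nm_col A i j k a h1 h2]
  rw [Finset.sum_congr rfl (fun a _ => this a), Finset.sum_add_distrib]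
  simp

def Em : Matrix n n (ZMod 2) := 1 + Nm A i j

lemma Em_mul_Em : Em A i j * Em A i j = 1 := by
  have hNN : Nm A i j * Nm A i j = 0 := by
    ext k b
    rw [mul_apply]
    refine (Finset.sum_eq_zero ?_).trans (Matrix.zero_apply k b).symm
    intro a _
    by_cases h1 : a = i
    · subst h1; rw [Nm_row_i, mul_zero]
    · by_cases h2 : a = j
      · subst h2; rw [Nm_row_j, mul_zero]
      · rw [Nm_col A i j k a h1 h2, zero_mul]
  have h2 : Nm A i j + Nm A i j = 0 := by
    ext k a; simp [← two_mul, show (2 : ZMod 2) = 0 by decide]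
  rw [Em, add_mul, mul_add, mul_add, one_mul, mul_one, hNN, add_zero, one_mul, add_assoc, h2, add_zero]

lemma mulE_apply (hij : i ≠ j) (k b : n) :
    (Em A i j * A) k b = A k b + (Nm A i j k i * A i b + Nm A i j k j * A j b) := by
  rw [Em, add_mul, one_mul, Matrix.add_apply]
  congr 1
  rw [mul_apply, Nm_split A i j hij (fun a => A a b) k]

lemma mul_Emt_apply (hij : i ≠ j) (M : Matrix n n (ZMod 2)) (k l : n) :
    (M * (Em A i j)ᵀ) k l = M k l + (Nm A i j l i * M k i + Nm A i j l j * M k j) := by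
  rw [Em, Matrix.transpose_add, Matrix.transpose_one, mul_add, mul_one, Matrix.add_apply]
  congr 1
  rw [mul_apply]
  simp only [Matrix.transpose_apply]
  rw [Finset.sum_congr rfl (fun b _ => mul_comm (M k b) (Nm A i j l b)),
    Nm_split A i j hij (fun b => M k b) l]

lemma quad_zero' (hs : Aᵀ = A) (hd : ∀ k, A k k = 0) (x : n → ZMod 2) : x ⬝ᵥ (A *ᵥ x) = 0 := by
  have hsym : ∀ a b, A a b = A b a := fun a b => by
    conv_lhs => rw [← hs, transpose_apply]
  rw [dotProduct]
  simp only [mulVec, dotProduct, Finset.mul_sum]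
  rw [← Finset.sum_product']
  apply Finset.sum_involution (fun p _ => (p.2, p.1))
  · intro ⟨a,b⟩ _
    simp only
    by_cases hab : a = b
    · subst hab; simp [hd a]
    · rw [hsym b a]; ring_nf
      rw [show (2 : ZMod 2) = 0 by decide, mul_zero]
  · intro ⟨a,b⟩ ha h heq
    have hba : b = a := (Prod.mk.injEq _ _ _ _ ▸ heq).1
    apply h
    subst hba
    simp [hd b]
  · intro a ha; simp
  · intro a ha; rfl

def Bm : Matrix n n (ZMod 2) := Em A i j * A * (Em A i j)ᵀ

lemma Bm_symm (hs : Aᵀ = A) : (Bm A i j)ᵀ = Bm A i j := by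
  rw [Bm, Matrix.transpose_mul, Matrix.transpose_mul, Matrix.transpose_transpose, hs,
    ← Matrix.mul_assoc]

lemma Bm_diag (hs : Aᵀ = A) (hd : ∀ k, A k k = 0) (k : n) : Bm A i j k k = 0 := by
  have : Bm A i j k k = (Em A i j k) ⬝ᵥ (A *ᵥ (Em A i j k)) := by
    simp only [Bm, mul_apply, Matrix.transpose_apply, dotProduct, mulVec, Finset.sum_mul,
      Finset.mul_sum]
    rw [Finset.sum_comm]
    exact Finset.sum_congr rfl fun a _ => Finset.sum_congr rfl fun b _ => by ring
  rw [this, quad_zero' A hs hd]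

lemma Bm_ki (hs : Aᵀ = A) (hd : ∀ k, A k k = 0) (hij : i ≠ j) (h1 : A i j = 1) (k : n) (hk1 : k ≠ i) (hk2 : k ≠ j) : Bm A i j k i = 0 := by
  have e : A j i = 1 := by rw [← transpose_apply A i j, hs, h1]
  rw [Bm, mul_Emt_apply A i j hij, Nm_row_i, Nm_row_i, zero_mul, zero_mul, add_zero, add_zero,
    mulE_apply A i j hij, Nm_ki A i j hij k hk1 hk2, Nm_kj A i j hij k hk1 hk2,
    hd i, mul_zero, e, mul_one, zero_add, ← two_mul, show (2 : ZMod 2) = 0 by decide, zero_mul]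

lemma Bm_kj (hs : Aᵀ = A) (hd : ∀ k, A k k = 0) (hij : i ≠ j) (h1 : A i j = 1) (k : n) (hk1 : k ≠ i) (hk2 : k ≠ j) : Bm A i j k j = 0 := by
  rw [Bm, mul_Emt_apply A i j hij, Nm_row_j, Nm_row_j, zero_mul, zero_mul, add_zero, add_zero,
    mulE_apply A i j hij, Nm_ki A i j hij k hk1 hk2, Nm_kj A i j hij k hk1 hk2,
    hd j, mul_zero, h1, mul_one, add_zero, ← two_mul, show (2 : ZMod 2) = 0 by decide, zero_mul]

lemma Bm_row_i (hs : Aᵀ = A) (hd : ∀ k, A k k = 0) (hij : i ≠ j) (h1 : A i j = 1) : Bm A i j i = Pi.single j 1 := by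
  funext l
  have hM : ∀ b, (Em A i j * A) i b = A i b := fun b => by
    rw [mulE_apply A i j hij, Nm_row_i, Nm_row_i, zero_mul, zero_mul, add_zero, add_zero]
  have : Bm A i j i l = A i l + Nm A i j l j := by
    rw [Bm, mul_Emt_apply A i j hij, hM, hM, hM, hd i, mul_zero, zero_add, h1, mul_one]
  by_cases h2 : l = j
  · subst h2; rw [this, Nm_row_j, add_zero, h1, Pi.single_eq_same]
  · rw [Pi.single_eq_of_ne h2, this]
    by_cases h3 : l = i
    · rw [h3, hd i, Nm_row_i, add_zero]
    · rw [Nm_kj A i j hij l h3 h2, ← transpose_apply A l i, hs, ← two_mul,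
        show (2 : ZMod 2) = 0 by decide, zero_mul]

lemma Bm_row_j (hs : Aᵀ = A) (hd : ∀ k, A k k = 0) (hij : i ≠ j) (h1 : A i j = 1) : Bm A i j j = Pi.single i 1 := by
  funext l
  have e : A j i = 1 := by rw [← transpose_apply A i j, hs, h1]
  have hM : ∀ b, (Em A i j * A) j b = A j b := fun b => by
    rw [mulE_apply A i j hij, Nm_row_j, Nm_row_j, zero_mul, zero_mul, add_zero, add_zero]
  have : Bm A i j j l = A j l + Nm A i j l i := by
    rw [Bm, mul_Emt_apply A i j hij, hM, hM, hM, hd j, mul_zero, add_zero, e, mul_one]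
  by_cases h2 : l = i
  · subst h2; rw [this, Nm_row_i, add_zero, e, Pi.single_eq_same]
  · rw [Pi.single_eq_of_ne h2, this]
    by_cases h3 : l = j
    · rw [h3, hd j, Nm_row_j, add_zero]
    · rw [Nm_ki A i j hij l h2 h3, ← transpose_apply A l j, hs, ← two_mul,
        show (2 : ZMod 2) = 0 by decide, zero_mul]

lemma Bm_rank : (Bm A i j).rank = A.rank := by
  have hdet : IsUnit (Em A i j).det := by
    apply Matrix.isUnit_det_of_left_inverse
    exact Em_mul_Em A i j
  have hdet' : IsUnit (Em A i j)ᵀ.det := by rwa [Matrix.det_transpose]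
  rw [Bm, Matrix.rank_mul_eq_left_of_isUnit_det _ _ hdet',
    Matrix.rank_mul_eq_right_of_isUnit_det _ _ hdet]

end conj
lemma rank_split (B : Matrix n n (ZMod 2)) (i j : n) (hij : i ≠ j)
    (hrow_i : B i = Pi.single j 1) (hrow_j : B j = Pi.single i 1)
    (hcol : ∀ k, k ≠ i → k ≠ j → B k i = 0 ∧ B k j = 0) :
    B.rank = 2 + (B.submatrix (fun k : {k : n // k ≠ i ∧ k ≠ j} => (k : n))
      (fun k : {k : n // k ≠ i ∧ k ≠ j} => (k : n))).rank := by
  classical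
  set p : n → Prop := fun k => k ≠ i ∧ k ≠ j with hp
  set C := B.submatrix (fun k : {k : n // k ≠ i ∧ k ≠ j} => (k : n)) (fun k : {k : n // k ≠ i ∧ k ≠ j} => (k : n)) with hC
  -- rows viewpoint
  rw [Matrix.rank_eq_finrank_span_row, Matrix.rank_eq_finrank_span_row]
  unfold Matrix.row
  have huniv : (Set.univ : Set n) = ({i, j} : Set n) ∪ {k | p k} := by
    ext k
    by_cases h1 : k = i
    · simp [h1]
    · by_cases h2 : k = j
      · simp [h2]
      · simp [h1, h2, hp]
  have hrange : Set.range B = (({B i, B j} : Set (n → (ZMod 2))) ∪ B '' {k | p k}) := by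
    show Set.range B.row = {B.row i, B.row j} ∪ B.row '' {k | p k}
    rw [← Set.image_univ, huniv, Set.image_union, Set.image_pair]
  rw [hrange, Submodule.span_union]
  set S1 : Submodule (ZMod 2) (n → (ZMod 2)) := span (ZMod 2) {B i, B j} with hS1
  set S2 : Submodule (ZMod 2) (n → (ZMod 2)) := span (ZMod 2) (B '' {k | p k}) with hS2
  -- finrank S1 = 2
  have hv : LinearIndependent (ZMod 2) ![(Pi.single i 1 : n → ZMod 2), Pi.single j 1] := by
    have hg : Function.Injective (![i, j] : Fin 2 → n) := by
      intro a b hab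
      fin_cases a <;> fin_cases b <;> simp_all <;> first | rfl | exact absurd hab hij | exact absurd hab (Ne.symm hij)
    have := (Pi.basisFun (ZMod 2) n).linearIndependent.comp ![i, j] hg
    convert this using 1
    funext t
    fin_cases t <;> simp [Pi.basisFun_apply]
  have hfr1 : finrank (ZMod 2) S1 = 2 := by
    have : ({B i, B j} : Set (n → (ZMod 2))) = Set.range ![(Pi.single i 1 : n → ZMod 2), Pi.single j 1] := by
      rw [hrow_i, hrow_j]
      ext x
      constructor
      · rintro (rfl | rfl)
        · exact ⟨1, by simp⟩
        · exact ⟨0, by simp⟩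
      · rintro ⟨t, rfl⟩
        fin_cases t
        · right; simp
        · left; simp
    rw [hS1, this, finrank_span_eq_card hv, Fintype.card_fin]
  -- S2 lives in coordinates ≠ i, j
  have hS2le : ∀ x ∈ S2, x i = 0 ∧ x j = 0 := by
    intro x hx
    have h1 : S2 ≤ LinearMap.ker (LinearMap.proj i : (n → (ZMod 2)) →ₗ[(ZMod 2)] (ZMod 2)) ⊓
        LinearMap.ker (LinearMap.proj j) := by
      rw [hS2, Submodule.span_le]
      rintro y ⟨k, hk, rfl⟩
      obtain ⟨hk1, hk2⟩ := hcol k hk.1 hk.2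
      exact ⟨hk1, hk2⟩
    exact h1 hx
  -- trivial intersection
  have hinf : S1 ⊓ S2 = ⊥ := by
    rw [eq_bot_iff]
    rintro x ⟨hx1, hx2⟩
    obtain ⟨a, b, rfl⟩ := Submodule.mem_span_pair.mp hx1
    obtain ⟨hxi, hxj⟩ := hS2le _ hx2
    rw [hrow_i, hrow_j] at hxi hxj ⊢
    simp only [Pi.add_apply, Pi.smul_apply, Pi.single_eq_same, Pi.single_eq_of_ne hij,
      Pi.single_eq_of_ne (Ne.symm hij), smul_zero, smul_eq_mul, mul_one, mul_zero,
      zero_add, add_zero] at hxi hxj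
    rw [hxi, hxj]
    simp
  -- finrank of sup
  have hsup : finrank (ZMod 2) ↥(S1 ⊔ S2) = 2 + finrank (ZMod 2) S2 := by
    have := Submodule.finrank_sup_add_finrank_inf_eq S1 S2
    rw [hinf, finrank_bot, add_zero, hfr1] at this
    exact this
  rw [hsup]
  congr 1
  -- finrank S2 = rank C via extension by zero
  let φ : ({k : n // p k} → (ZMod 2)) →ₗ[(ZMod 2)] (n → (ZMod 2)) :=
    { toFun := fun v l => if h : p l then v ⟨l, h⟩ else 0
      map_add' := by
        intro v w; funext l
        by_cases h : p l
        · simp only [Pi.add_apply, dif_pos h]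
        · simp only [Pi.add_apply, dif_neg h, add_zero]
      map_smul' := by
        intro c v; funext l
        by_cases h : p l
        · simp only [RingHom.id_apply, Pi.smul_apply, dif_pos h]
        · simp only [RingHom.id_apply, Pi.smul_apply, dif_neg h, smul_zero] }
  have hφinj : Function.Injective φ := by
    intro v w hvw
    funext x
    have := congrFun hvw x.1
    simp only [φ, LinearMap.coe_mk, AddHom.coe_mk] at this
    rw [dif_pos x.2, dif_pos x.2] at this
    simpa using this
  have hφrow : ∀ k : {k : n // p k}, φ (C k) = B k.1 := by
    intro k
    funext l
    simp only [φ, LinearMap.coe_mk, AddHom.coe_mk]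
    by_cases h : p l
    · rw [dif_pos h]
      simp [hC]
    · rw [dif_neg h]
      have : l = i ∨ l = j := by
        by_contra hcon
        push_neg at hcon
        exact h ⟨hcon.1, hcon.2⟩
      obtain ⟨hk1, hk2⟩ := hcol k.1 k.2.1 k.2.2
      rcases this with rfl | rfl
      · rw [hk1]
      · rw [hk2]
  have himg : φ '' Set.range C = B '' {k | p k} := by
    ext y
    constructor
    · rintro ⟨_, ⟨k, rfl⟩, rfl⟩
      exact ⟨k.1, k.2, (hφrow k).symm ▸ rfl⟩
    · rintro ⟨k, hk, rfl⟩
      exact ⟨C ⟨k, hk⟩, ⟨⟨k, hk⟩, rfl⟩, hφrow ⟨k, hk⟩⟩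
  have hmap : Submodule.map φ (span (ZMod 2) (Set.range C)) = S2 := by
    rw [Submodule.map_span, himg]
  rw [← hmap]
  exact (LinearEquiv.finrank_eq (Submodule.equivMapOfInjective φ hφinj _)).symm
universe u

lemma even_rank_of_symm_diag_zero (N : ℕ) :
    ∀ (n : Type u) [Fintype n] [DecidableEq n], Fintype.card n ≤ N →
      ∀ (A : Matrix n n (ZMod 2)), Aᵀ = A → (∀ k, A k k = 0) → Even A.rank := by
  induction N with
  | zero =>
    intro n _ _ hcard A hs hd
    have : A.rank = 0 := Nat.le_zero.mp ((Matrix.rank_le_card_width A).trans hcard)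
    rw [this]; exact Even.zero
  | succ N ih =>
    intro n _ _ hcard A hs hd
    by_cases hA : A = 0
    · rw [hA, Matrix.rank_zero]; exact Even.zero
    · have hex : ∃ i j, A i j ≠ 0 := by
        by_contra hcon
        push_neg at hcon
        exact hA (Matrix.ext fun i j => hcon i j)
      obtain ⟨i, j, hij0⟩ := hex
      have hij : i ≠ j := by
        rintro rfl
        exact hij0 (hd i)
      have h1 : A i j = 1 := by
        have : ∀ a : ZMod 2, a ≠ 0 → a = 1 := by decide
        exact this _ hij0
      set B := Bm A i j with hB
      have hBs : Bᵀ = B := Bm_symm A i j hs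
      have hBsym : ∀ a b, B a b = B b a := fun a b => by
        conv_lhs => rw [← hBs, Matrix.transpose_apply]
      have hrank : B.rank = A.rank := Bm_rank A i j
      have hsplit := rank_split B i j hij (Bm_row_i A i j hs hd hij h1)
        (Bm_row_j A i j hs hd hij h1)
        (fun k hk1 hk2 => ⟨Bm_ki A i j hs hd hij h1 k hk1 hk2,
          Bm_kj A i j hs hd hij h1 k hk1 hk2⟩)
      set C := B.submatrix (fun k : {k : n // k ≠ i ∧ k ≠ j} => (k : n))
        (fun k : {k : n // k ≠ i ∧ k ≠ j} => (k : n)) with hCdef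
      have hCs : Cᵀ = C := by
        ext k l
        rw [Matrix.transpose_apply, hCdef]
        exact hBsym _ _
      have hCd : ∀ k, C k k = 0 := fun k => Bm_diag A i j hs hd k.1
      have hcard' : Fintype.card {k : n // k ≠ i ∧ k ≠ j} ≤ N := by
        have hlt : Fintype.card {k : n // k ≠ i ∧ k ≠ j} < Fintype.card n :=
          Fintype.card_subtype_lt (x := i) (by simp)
      -- card n ≤ N + 1
        omega
      have hCeven : Even C.rank := ih _ hcard' C hCs hCd
      rw [← hrank, hsplit]
      exact (even_two).add hCeven

lemma neg_one_pow_nullityOn {V : Type u} [Fintype V] [DecidableEq V]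
    (G : SimpleGraph V) [DecidableRel G.Adj] (T : Finset V) :
    (-1 : ℤ) ^ nullityOn (G.adjMatrix (ZMod 2)) T = (-1) ^ T.card := by
  classical
  set A := (G.adjMatrix (ZMod 2)).submatrix (fun i : {x // x ∈ T} => (i : V))
    (fun i : {x // x ∈ T} => (i : V)) with hA
  have hAs : Aᵀ = A := by
    rw [hA, Matrix.transpose_submatrix, SimpleGraph.transpose_adjMatrix]
  have hAd : ∀ k, A k k = 0 := fun k => by simp [hA]
  have heven : Even A.rank :=
    even_rank_of_symm_diag_zero (Fintype.card {x // x ∈ T}) _ le_rfl A hAs hAd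
  have hle : A.rank ≤ T.card := by
    have := Matrix.rank_le_card_width A
    rwa [Fintype.card_coe] at this
  have : nullityOn (G.adjMatrix (ZMod 2)) T = T.card - A.rank := rfl
  rw [this]
  have key : (-1 : ℤ) ^ (T.card - A.rank) * (-1) ^ A.rank = (-1) ^ T.card := by
    rw [← pow_add, Nat.sub_add_cancel hle]
  rw [heven.neg_one_pow, mul_one] at key
  exact key

end Aux

/-- The interlace polynomial of a simple graph with at least one vertex has
zero constant coefficient. -/
theorem interlace_constant_term {V : Type*} [Fintype V] [DecidableEq V]
    (G : SimpleGraph V) [DecidableRel G.Adj] (h : 1 ≤ Fintype.card V) :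
    (∑ T : Finset V,
        ((Polynomial.X : Polynomial ℤ) - 1) ^ nullityOn (G.adjMatrix (ZMod 2)) T).coeff 0
      = 0 := by
  classical
  rw [Polynomial.finset_sum_coeff]
  have hterm : ∀ T : Finset V,
      (((Polynomial.X : Polynomial ℤ) - 1) ^ nullityOn (G.adjMatrix (ZMod 2)) T).coeff 0
        = (-1) ^ T.card := by
    intro T
    rw [Polynomial.coeff_zero_eq_eval_zero]
    simp only [Polynomial.eval_pow, Polynomial.eval_sub, Polynomial.eval_X,
      Polynomial.eval_one, zero_sub]
    exact neg_one_pow_nullityOn G T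
  rw [Finset.sum_congr rfl (fun T _ => hterm T)]
  have huniv : (Finset.univ : Finset (Finset V)) = Finset.univ.powerset := by
    rw [Finset.powerset_univ]
  rw [huniv, Finset.sum_powerset_neg_one_pow_card, if_neg]
  intro hcon
  have : Fintype.card V = 0 := by
    rw [← Finset.card_univ, hcon, Finset.card_empty]
  omega
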